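/- For every integer N ≥ 1, the following five statements are equivalent: (a) B_N is a frame of H (for some bounds 0 < A ≤ B); (b) the set {p'_N(w_1), …, p'_N(w_N)} spans H'_N; (c) the set {p'_N(w_1), …, p'_N(w_N)} is linearly independent; (d) B_N is a Riesz sequence in H (for some bounds 0 < A ≤ B); (e) B_N is a Riesz basis of H. -/

import Mathlib

open scoped BigOperators ComplexConjugate
open Submodule Filter

noncomputable section

local notation "⟪" x ", " y "⟫" => @inner ℂ _ _ x y

variable {H : Type*} [NormedAddCommGroup H] [InnerProductSpace ℂ H] [CompleteSpace H]

/-- `u` is a frame of `H` with frame bounds `A ≤ B`. -/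
def IsFrame (u : ℕ → H) (A B : ℝ) : Prop :=
  0 < A ∧ A ≤ B ∧ ∀ f : H,
    Summable (fun j => ‖⟪f, u j⟫‖ ^ 2) ∧
    A * ‖f‖ ^ 2 ≤ (∑' j, ‖⟪f, u j⟫‖ ^ 2) ∧ (∑' j, ‖⟪f, u j⟫‖ ^ 2) ≤ B * ‖f‖ ^ 2

/-- `u` is a Riesz sequence in `H` with bounds `A ≤ B`. -/
def IsRieszSeq (u : ℕ → H) (A B : ℝ) : Prop :=
  0 < A ∧ A ≤ B ∧ ∀ (s : Finset ℕ) (c : ℕ → ℂ),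
    A * ∑ j ∈ s, ‖c j‖ ^ 2 ≤ ‖∑ j ∈ s, c j • u j‖ ^ 2 ∧
    ‖∑ j ∈ s, c j • u j‖ ^ 2 ≤ B * ∑ j ∈ s, ‖c j‖ ^ 2

/-- A Riesz basis of `H` with frame constants `A ≤ B` is simultaneously a frame and a
Riesz sequence with those bounds. -/
def IsRieszBasis (u : ℕ → H) (A B : ℝ) : Prop := IsFrame u A B ∧ IsRieszSeq u A B

/-- Optimal frame constants of a Riesz basis: the largest `A` and the smallest `B`. -/
def OptimalRieszConstants (u : ℕ → H) (A B : ℝ) : Prop :=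
  IsRieszBasis u A B ∧ ∀ A' B' : ℝ, IsRieszBasis u A' B' → A' ≤ A ∧ B ≤ B'

/-- Optimal frame bounds of a frame: the largest `A` and the smallest `B`. -/
def OptimalFrameBounds (u : ℕ → H) (A B : ℝ) : Prop :=
  IsFrame u A B ∧ ∀ A' B' : ℝ, IsFrame u A' B' → A' ≤ A ∧ B ≤ B'

/-- The sequence `B_N`: the first `N` vectors of `v` are replaced by those of `w`. -/
def BNseq (w v : ℕ → H) (N : ℕ) : ℕ → H := fun j => if j < N then w j else v j

/-- The orthogonal projection `p'_N` onto `H'_N = span {v_0, …, v_{N-1}}`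
(for an orthonormal family `v`). -/
def pproj (v : ℕ → H) (N : ℕ) (u : H) : H := ∑ j ∈ Finset.range N, ⟪v j, u⟫ • v j

/-- The sequence `B̃_N`: the projections `p'_N (w_j)` for `j < N`, followed by the `v_j`. -/
def BtNseq (w v : ℕ → H) (N : ℕ) : ℕ → H := fun j => if j < N then pproj v N (w j) else v j

/-- The `N × N` matrix `U'_N` with (paper-convention) entries `⟨p'_N w_i, p'_N w_j⟩`;
here stated with Mathlib's inner product, conjugate-linear in the first slot. -/
def Umat' (v w : ℕ → H) (N : ℕ) : Matrix (Fin N) (Fin N) ℂ :=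
  Matrix.of fun i j => ⟪pproj v N (w (j : ℕ)), pproj v N (w (i : ℕ))⟫

/-- The `N × N` matrix `U''_N` with (paper-convention) entries `⟨p''_N w_i, p''_N w_j⟩`,
where `p''_N u = u - p'_N u`. -/
def Umat'' (v w : ℕ → H) (N : ℕ) : Matrix (Fin N) (Fin N) ℂ :=
  Matrix.of fun i j =>
    ⟪w (j : ℕ) - pproj v N (w (j : ℕ)), w (i : ℕ) - pproj v N (w (i : ℕ))⟫

/-- The quadratic form `⟨U c, c⟩ = ∑_{i,j} U_{i,j} c_i conj (c_j)` (real part). -/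
def quadForm {N : ℕ} (U : Matrix (Fin N) (Fin N) ℂ) (c : Fin N → ℂ) : ℝ :=
  (∑ i, ∑ j, U i j * c i * conj (c j)).re

/-- The matrix `M_N` with (paper-convention) entries `⟨w_j, v_k⟩`. -/
def Mmat (v w : ℕ → H) (N : ℕ) : Matrix (Fin N) (Fin N) ℂ :=
  Matrix.of fun j k => ⟪v (k : ℕ), w (j : ℕ)⟫

/-- The quantity `∑_{j ≤ N} |⟨f, w_j⟩|² + ∑_{j > N} |⟨f, v_j⟩|²`
(the squared norm of the analysis operator of `B_N` applied to `f`). -/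
def frameFun (v w : ℕ → H) (N : ℕ) (f : H) : ℝ :=
  (∑ j ∈ Finset.range N, ‖⟪f, w j⟫‖ ^ 2) + ∑' j : {j : ℕ // N ≤ j}, ‖⟪f, v (j : ℕ)⟫‖ ^ 2

/-- The quantity `∑_{j ≤ N} |⟨f, p'_N w_j⟩|² + ∑_{j > N} |⟨f, v_j⟩|²`
(the squared norm of the analysis operator of `B̃_N` applied to `f`). -/
def frameFunT (v w : ℕ → H) (N : ℕ) (f : H) : ℝ :=
  (∑ j ∈ Finset.range N, ‖⟪f, pproj v N (w j)⟫‖ ^ 2) +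
    ∑' j : {j : ℕ // N ≤ j}, ‖⟪f, v (j : ℕ)⟫‖ ^ 2


section AuxLemmasForStatement0
open Topology

set_option linter.unusedSectionVars false
set_option maxHeartbeats 1000000

def Tmap (w v : ℕ → H) (N : ℕ) : H →L[ℂ] H :=
  ContinuousLinearMap.id ℂ H +
    ∑ i ∈ Finset.range N, (innerSL ℂ (v i)).smulRight (w i - v i)

variable {v w : ℕ → H} {N : ℕ}

lemma inner_v_pproj (hv : Orthonormal ℂ v) {k : ℕ} (hk : k < N) (u : H) :
    ⟪v k, pproj v N u⟫ = ⟪v k, u⟫ := by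
  have h := orthonormal_iff_ite.mp hv
  simp only [pproj, inner_sum, inner_smul_right]
  rw [Finset.sum_congr rfl (fun j _ => by rw [h k j])]
  simp [Finset.mem_range, hk, eq_comm]

lemma pproj_mem (u : H) : pproj v N u ∈ span ℂ (v '' Set.Iio N) := by
  refine Submodule.sum_mem _ fun j hj => Submodule.smul_mem _ _ (subset_span ?_)
  exact ⟨j, Finset.mem_range.mp hj, rfl⟩

lemma range_fin_val_comp (g : ℕ → H) : Set.range (fun j : Fin N => g (j : ℕ)) = g '' Set.Iio N := by
  ext x
  constructor
  · rintro ⟨i, rfl⟩; exact ⟨i, i.isLt, rfl⟩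
  · rintro ⟨j, hj, rfl⟩; exact ⟨⟨j, hj⟩, rfl⟩

lemma finrank_span_v (hv : Orthonormal ℂ v) :
    Module.finrank ℂ (span ℂ (v '' Set.Iio N)) = N := by
  rw [← range_fin_val_comp v]
  have hli : LinearIndependent ℂ (fun j : Fin N => v (j : ℕ)) :=
    hv.linearIndependent.comp Fin.val Fin.val_injective
  rw [finrank_span_eq_card hli, Fintype.card_fin]

lemma Tmap_apply (f : H) :
    Tmap w v N f = f + ∑ i ∈ Finset.range N, ⟪v i, f⟫ • (w i - v i) := by
  simp [Tmap, ContinuousLinearMap.sum_apply]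

lemma Tmap_v (hv : Orthonormal ℂ v) (j : ℕ) : Tmap w v N (v j) = BNseq w v N j := by
  have h := orthonormal_iff_ite.mp hv
  rw [Tmap_apply]
  rw [Finset.sum_congr rfl (fun i _ => by rw [h i j])]
  simp only [ite_smul, one_smul, zero_smul]
  rw [Finset.sum_ite_eq' (Finset.range N) j (fun i => w i - v i)]
  by_cases hj : j < N <;> simp [BNseq, hj]

lemma pproj_Tmap (hv : Orthonormal ℂ v) (f : H) :
    pproj v N (Tmap w v N f) = ∑ i ∈ Finset.range N, ⟪v i, f⟫ • pproj v N (w i) := by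
  have h := orthonormal_iff_ite.mp hv
  have hpv : ∀ i ∈ Finset.range N, pproj v N (v i) = v i := by
    intro i hi
    simp only [pproj]
    rw [Finset.sum_congr rfl (fun k _ => by rw [h k i])]
    simp only [ite_smul, one_smul, zero_smul]
    rw [Finset.sum_ite_eq' (Finset.range N) i (fun k => v k)]
    simp [Finset.mem_range.mp hi]
  have hadd : ∀ x y : H, pproj v N (x + y) = pproj v N x + pproj v N y := by
    intro x y
    simp [pproj, inner_add_right, add_smul, Finset.sum_add_distrib]
  have hsmul : ∀ (c : ℂ) (x : H), pproj v N (c • x) = c • pproj v N x := by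
    intro c x
    simp [pproj, inner_smul_right, smul_smul, Finset.smul_sum]
  have hsub : ∀ x y : H, pproj v N (x - y) = pproj v N x - pproj v N y := by
    intro x y
    simp [pproj, inner_sub_right, sub_smul, Finset.sum_sub_distrib]
  have hsum : ∀ (s : Finset ℕ) (g : ℕ → H),
      pproj v N (∑ i ∈ s, g i) = ∑ i ∈ s, pproj v N (g i) := by
    intro s g
    induction s using Finset.induction with
    | empty => simp [pproj]
    | insert _ _ hx ih => rw [Finset.sum_insert hx, hadd, ih, Finset.sum_insert hx]
  rw [Tmap_apply, hadd, hsum]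
  have : ∀ i ∈ Finset.range N, pproj v N (⟪v i, f⟫ • (w i - v i))
      = ⟪v i, f⟫ • pproj v N (w i) - ⟪v i, f⟫ • v i := by
    intro i hi
    rw [hsmul, hsub, hpv i hi, smul_sub]
  rw [Finset.sum_congr rfl this, Finset.sum_sub_distrib]
  have hpf : pproj v N f = ∑ i ∈ Finset.range N, ⟪v i, f⟫ • v i := rfl
  rw [hpf]
  abel

lemma parseval (hv : Orthonormal ℂ v)
    (hv_top : (span ℂ (Set.range v)).topologicalClosure = ⊤) (g : H) :
    ∑' j, ‖⟪v j, g⟫‖ ^ 2 = ‖g‖ ^ 2 := by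
  let hb : HilbertBasis ℕ ℂ H := HilbertBasis.mk hv (le_of_eq hv_top.symm)
  have hcoe : ⇑hb = v := HilbertBasis.coe_mk hv _
  have h := hb.tsum_inner_mul_inner g g
  rw [hcoe] at h
  have hterm : ∀ i : ℕ, ⟪g, v i⟫ * ⟪v i, g⟫ = ((‖⟪v i, g⟫‖ ^ 2 : ℝ) : ℂ) := by
    intro i
    rw [← inner_conj_symm g (v i), Complex.conj_mul']
    push_cast
    ring
  rw [tsum_congr hterm, ← Complex.ofReal_tsum] at h
  have h3 := congrArg Complex.re h
  simp only [← RCLike.re_to_complex] at h3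
  rw [inner_self_eq_norm_sq] at h3
  simpa using h3

lemma riesz_of_li (hv : Orthonormal ℂ v)
    (hv_top : (span ℂ (Set.range v)).topologicalClosure = ⊤)
    (hli : LinearIndependent ℂ (fun j : Fin N => pproj v N (w (j : ℕ)))) :
    ∃ A B : ℝ, IsRieszBasis (BNseq w v N) A B := by
  classical
  set T := Tmap w v N with hT
  have hinj : ∀ f : H, T f = 0 → f = 0 := by
    intro f hf
    have h1 : pproj v N (T f) = 0 := by rw [hf]; simp [pproj]
    rw [hT, pproj_Tmap hv] at h1
    rw [← Fin.sum_univ_eq_sum_range (fun i => ⟪v i, f⟫ • pproj v N (w i)) N] at h1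
    have h3 := Fintype.linearIndependent_iff.mp hli (fun i => ⟪v (i : ℕ), f⟫) h1
    have h4 : T f = f := by
      rw [hT, Tmap_apply]
      have hz : ∀ i ∈ Finset.range N, ⟪v i, f⟫ • (w i - v i) = 0 := by
        intro i hi
        have := h3 ⟨i, Finset.mem_range.mp hi⟩
        simp only at this
        simp [this]
      rw [Finset.sum_congr rfl hz]
      simp
    rw [← h4, hf]
  have hle : span ℂ (Set.range (fun j : Fin N => pproj v N (w (j : ℕ))))
      ≤ span ℂ (v '' Set.Iio N) := by
    rw [span_le]; rintro x ⟨i, rfl⟩; exact pproj_mem _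
  haveI : FiniteDimensional ℂ (span ℂ (v '' Set.Iio N)) := by
    rw [← range_fin_val_comp v]
    exact FiniteDimensional.span_of_finite ℂ (Set.finite_range _)
  have hspan : span ℂ (Set.range (fun j : Fin N => pproj v N (w (j : ℕ))))
      = span ℂ (v '' Set.Iio N) := by
    apply Submodule.eq_of_le_of_finrank_le hle
    rw [finrank_span_v hv, finrank_span_eq_card hli, Fintype.card_fin]
  have hsurj : ∀ g : H, ∃ f, T f = g := by
    intro g
    have hmem : pproj v N g ∈ span ℂ (Set.range (fun j : Fin N => pproj v N (w (j : ℕ)))) := by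
      rw [hspan]; exact pproj_mem g
    obtain ⟨c, hc⟩ := (mem_span_range_iff_exists_fun ℂ).mp hmem
    set c' : ℕ → ℂ := fun i => if h : i < N then c ⟨i, h⟩ else 0 with hc'
    have hcrange : ∑ i ∈ Finset.range N, c' i • pproj v N (w i) = pproj v N g := by
      rw [← Fin.sum_univ_eq_sum_range (fun i => c' i • pproj v N (w i)) N, ← hc]
      refine Finset.sum_congr rfl fun i _ => ?_
      simp [hc', i.isLt]
    set f := g - (∑ i ∈ Finset.range N, c' i • w i) + ∑ i ∈ Finset.range N, c' i • v i
      with hfdef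
    have hinnf : ∀ k, k < N → ⟪v k, f⟫ = c' k := by
      intro k hk
      have e0 := congrArg (fun x => ⟪v k, x⟫) hcrange
      simp only [inner_sum, inner_smul_right] at e0
      rw [inner_v_pproj hv hk] at e0
      have e1 : ⟪v k, g⟫ = ∑ i ∈ Finset.range N, c' i * ⟪v k, w i⟫ := by
        rw [← e0]
        exact (Finset.sum_congr rfl fun i _ => by rw [inner_v_pproj hv hk]).symm
      have horth := orthonormal_iff_ite.mp hv
      have e2 : ∑ i ∈ Finset.range N, c' i * ⟪v k, v i⟫ = c' k := by
        rw [Finset.sum_congr rfl (fun i _ => by rw [horth k i])]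
        simp only [mul_ite, mul_one, mul_zero]
        rw [Finset.sum_ite_eq (Finset.range N) k (fun i => c' i)]
        simp [hk]
      rw [hfdef, inner_add_right, inner_sub_right, inner_sum, inner_sum]
      simp only [inner_smul_right]
      rw [e2, ← e1, sub_self, zero_add]
    refine ⟨f, ?_⟩
    rw [hT, Tmap_apply]
    have hterm : ∀ i ∈ Finset.range N, ⟪v i, f⟫ • (w i - v i) = c' i • w i - c' i • v i := by
      intro i hi
      rw [hinnf i (Finset.mem_range.mp hi), smul_sub]
    rw [Finset.sum_congr rfl hterm, Finset.sum_sub_distrib, hfdef]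
    abel
  have hkerT : T.ker = ⊥ := by
    rw [eq_bot_iff]; intro x hx; exact (Submodule.mem_bot ℂ).mpr (hinj x hx)
  have hrangeT : T.range = ⊤ := by
    rw [eq_top_iff]; rintro y -; obtain ⟨f, hf⟩ := hsurj y; exact ⟨f, hf⟩
  set Te := ContinuousLinearEquiv.ofBijective T hkerT hrangeT with hTe
  set S : H →L[ℂ] H := (Te.symm : H →L[ℂ] H) with hS
  have hST : ∀ x, S (T x) = x := fun x => Te.symm_apply_apply x
  have hTS : ∀ x, T (S x) = x := fun x => Te.apply_symm_apply x
  have hv0 : ‖v 0‖ = 1 := hv.1 0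
  have h1le : (1 : ℝ) ≤ ‖S‖ * ‖T‖ := by
    have h := calc ‖v 0‖ = ‖S (T (v 0))‖ := by rw [hST]
      _ ≤ ‖S‖ * ‖T (v 0)‖ := S.le_opNorm _
      _ ≤ ‖S‖ * (‖T‖ * ‖v 0‖) :=
          mul_le_mul_of_nonneg_left (T.le_opNorm _) (norm_nonneg S)
    rw [hv0, mul_one] at h
    exact h
  have hSpos : (0 : ℝ) < ‖S‖ := by nlinarith [norm_nonneg (S : H →L[ℂ] H), norm_nonneg T]
  have hTpos : (0 : ℝ) < ‖T‖ := by nlinarith [norm_nonneg (S : H →L[ℂ] H), norm_nonneg T]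
  have hS2 : (0 : ℝ) < ‖S‖ ^ 2 := by positivity
  have hAB : (‖S‖ ^ 2)⁻¹ ≤ ‖T‖ ^ 2 := by
    rw [← one_div, div_le_iff₀ hS2]
    nlinarith
  have hlow : ∀ x : H, ‖x‖ ≤ ‖S‖ * ‖T x‖ := by
    intro x
    calc ‖x‖ = ‖S (T x)‖ := by rw [hST]
      _ ≤ ‖S‖ * ‖T x‖ := S.le_opNorm _
  refine ⟨(‖S‖ ^ 2)⁻¹, ‖T‖ ^ 2, ?_, ?_⟩
  · -- frame
    refine ⟨by positivity, hAB, fun f => ?_⟩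
    set g := ContinuousLinearMap.adjoint T f with hg
    have hkey : ∀ j, ‖⟪f, BNseq w v N j⟫‖ ^ 2 = ‖⟪v j, g⟫‖ ^ 2 := by
      intro j
      rw [← Tmap_v hv j, ← ContinuousLinearMap.adjoint_inner_left, ← hg, norm_inner_symm]
    have hsummable : Summable (fun j => ‖⟪f, BNseq w v N j⟫‖ ^ 2) :=
      (Orthonormal.inner_products_summable g hv).congr (fun j => (hkey j).symm)
    have htsum : ∑' j, ‖⟪f, BNseq w v N j⟫‖ ^ 2 = ‖g‖ ^ 2 := by
      rw [tsum_congr hkey, parseval hv hv_top g]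
    have hadjcomp :
        (ContinuousLinearMap.adjoint S).comp (ContinuousLinearMap.adjoint T)
          = ContinuousLinearMap.id ℂ H := by
      rw [← ContinuousLinearMap.adjoint_comp]
      have hcomp : T.comp S = ContinuousLinearMap.id ℂ H := ContinuousLinearMap.ext hTS
      rw [hcomp, ContinuousLinearMap.adjoint_id]
    have hfg : f = ContinuousLinearMap.adjoint S g := by
      have := congrArg (fun (L : H →L[ℂ] H) => L f) hadjcomp
      simpa [hg] using this.symm
    have hfle : ‖f‖ ≤ ‖S‖ * ‖g‖ := by
      calc ‖f‖ = ‖ContinuousLinearMap.adjoint S g‖ := by rw [← hfg]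
        _ ≤ ‖ContinuousLinearMap.adjoint S‖ * ‖g‖ := (ContinuousLinearMap.adjoint S).le_opNorm g
        _ = ‖S‖ * ‖g‖ := by rw [LinearIsometryEquiv.norm_map]
    have hgle : ‖g‖ ≤ ‖T‖ * ‖f‖ := by
      calc ‖g‖ = ‖ContinuousLinearMap.adjoint T f‖ := by rw [hg]
        _ ≤ ‖ContinuousLinearMap.adjoint T‖ * ‖f‖ := (ContinuousLinearMap.adjoint T).le_opNorm f
        _ = ‖T‖ * ‖f‖ := by rw [LinearIsometryEquiv.norm_map]
    refine ⟨hsummable, ?_, ?_⟩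
    · rw [htsum, inv_mul_le_iff₀ hS2]
      nlinarith [norm_nonneg f, norm_nonneg g, norm_nonneg (S : H →L[ℂ] H)]
    · rw [htsum]
      nlinarith [norm_nonneg f, norm_nonneg g, norm_nonneg T]
  · -- Riesz sequence
    refine ⟨by positivity, hAB, fun s c => ?_⟩
    set x := ∑ j ∈ s, c j • v j with hx
    have hTx : ∑ j ∈ s, c j • BNseq w v N j = T x := by
      rw [hx, map_sum]
      exact Finset.sum_congr rfl fun j _ => by rw [map_smul, hT, Tmap_v hv]
    have hxn : ‖x‖ ^ 2 = ∑ j ∈ s, ‖c j‖ ^ 2 := by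
      have h1 : (⟪x, x⟫ : ℂ) = ∑ j ∈ s, ((‖c j‖ : ℂ)) ^ 2 := by
        rw [hx, hv.inner_sum c c s]
        exact Finset.sum_congr rfl fun j _ => Complex.conj_mul' (c j)
      have h3 := congrArg Complex.re h1
      simp only [← RCLike.re_to_complex] at h3
      rw [inner_self_eq_norm_sq] at h3
      simpa [Complex.re_sum, ← Complex.ofReal_pow] using h3
    rw [hTx]
    constructor
    · rw [← hxn, inv_mul_le_iff₀ hS2]
      have := hlow x
      nlinarith [norm_nonneg x, norm_nonneg (T x), norm_nonneg (S : H →L[ℂ] H)]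
    · rw [← hxn]
      have := T.le_opNorm x
      nlinarith [norm_nonneg x, norm_nonneg (T x), norm_nonneg T]


lemma mem_orth_of_inner_gen (x : H) (hx : ∀ k < N, ⟪v k, x⟫ = 0) :
    x ∈ (span ℂ (v '' Set.Iio N))ᗮ := by
  rw [Submodule.mem_orthogonal]
  intro u hu
  induction hu using Submodule.span_induction with
  | mem y hy => obtain ⟨k, hk, rfl⟩ := hy; exact hx k hk
  | zero => simp
  | add a b _ _ ha hb => rw [inner_add_left, ha, hb, add_zero]
  | smul c a _ ha => rw [inner_smul_left, ha, mul_zero]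

lemma inner_pproj_of_mem (hv : Orthonormal ℂ v) {f : H} (hf : f ∈ span ℂ (v '' Set.Iio N)) (u : H) :
    ⟪f, pproj v N u⟫ = ⟪f, u⟫ := by
  have h : u - pproj v N u ∈ (span ℂ (v '' Set.Iio N))ᗮ := by
    refine mem_orth_of_inner_gen _ fun k hk => ?_
    rw [inner_sub_right, inner_v_pproj hv hk, sub_self]
  have h0 := Submodule.inner_right_of_mem_orthogonal hf h
  rw [inner_sub_right, sub_eq_zero] at h0
  exact h0.symm

lemma inner_v_of_mem (hv : Orthonormal ℂ v) {f : H} (hf : f ∈ span ℂ (v '' Set.Iio N))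
    {j : ℕ} (hj : N ≤ j) : ⟪f, v j⟫ = 0 := by
  have h : v j ∈ (span ℂ (v '' Set.Iio N))ᗮ := by
    refine mem_orth_of_inner_gen _ fun k hk => ?_
    exact hv.2 (by omega)
  exact Submodule.inner_right_of_mem_orthogonal hf h


-- (a) → (b)
lemma span_of_frame (hv : Orthonormal ℂ v) {A B : ℝ} (hF : IsFrame (BNseq w v N) A B) :
    span ℂ ((fun j => pproj v N (w j)) '' Set.Iio N) = span ℂ (v '' Set.Iio N) := by
  by_contra hne
  set K := span ℂ ((fun j => pproj v N (w j)) '' Set.Iio N) with hK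
  have hle : K ≤ span ℂ (v '' Set.Iio N) := by
    rw [hK, span_le]; rintro x ⟨j, hj, rfl⟩; exact pproj_mem _
  obtain ⟨x, hxH, hxK⟩ := SetLike.exists_of_lt (lt_of_le_of_ne hle hne)
  haveI : FiniteDimensional ℂ K :=
    FiniteDimensional.span_of_finite ℂ ((Set.finite_Iio N).image _)
  haveI : CompleteSpace K := FiniteDimensional.complete ℂ K
  set f := x - (orthogonalProjection K x : H) with hf
  have hfne : f ≠ 0 := by
    intro h0
    rw [hf, sub_eq_zero] at h0
    exact hxK (h0 ▸ (orthogonalProjection K x).2)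
  have hfH' : f ∈ span ℂ (v '' Set.Iio N) :=
    Submodule.sub_mem _ hxH (hle (orthogonalProjection K x).2)
  have hfo : f ∈ Kᗮ := K.sub_starProjection_mem_orthogonal x
  have hzero : ∀ j, ⟪f, BNseq w v N j⟫ = 0 := by
    intro j
    by_cases hj : j < N
    · have h1 : ⟪f, pproj v N (w j)⟫ = 0 :=
        (Submodule.mem_orthogonal' K f).mp hfo _ (subset_span ⟨j, hj, rfl⟩)
      have h2 := inner_pproj_of_mem hv hfH' (w j)
      simp only [BNseq, if_pos hj]
      rw [← h2, h1]
    · simp only [BNseq, if_neg hj]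
      exact inner_v_of_mem hv hfH' (Nat.le_of_not_lt hj)
  obtain ⟨hA, hAB, hFf⟩ := hF
  obtain ⟨hs, hlow, hup⟩ := hFf f
  have htz : ∑' j, ‖⟪f, BNseq w v N j⟫‖ ^ 2 = 0 := by
    rw [tsum_congr (fun j => by rw [hzero j]; simp : ∀ j, ‖⟪f, BNseq w v N j⟫‖ ^ 2 = 0)]
    exact tsum_zero
  rw [htz] at hlow
  have hfpos : 0 < ‖f‖ ^ 2 := by
    have := norm_pos_iff.mpr hfne
    positivity
  nlinarith

-- (b) → (c)
lemma li_of_span (hv : Orthonormal ℂ v)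
    (hsp : span ℂ ((fun j => pproj v N (w j)) '' Set.Iio N) = span ℂ (v '' Set.Iio N)) :
    LinearIndependent ℂ (fun j : Fin N => pproj v N (w (j : ℕ))) := by
  rw [linearIndependent_iff_card_eq_finrank_span, Fintype.card_fin, Set.finrank,
    range_fin_val_comp (fun j => pproj v N (w j)), hsp, finrank_span_v hv]

-- (d) → (c)
lemma li_of_riesz (hv : Orthonormal ℂ v)
    (hv_top : (span ℂ (Set.range v)).topologicalClosure = ⊤)
    {A B : ℝ} (hR : IsRieszSeq (BNseq w v N) A B) :
    LinearIndependent ℂ (fun j : Fin N => pproj v N (w (j : ℕ))) := by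
  classical
  obtain ⟨hA, hAB, hRb⟩ := hR
  rw [Fintype.linearIndependent_iff]
  intro c hc0
  set c' : ℕ → ℂ := fun i => if h : i < N then c ⟨i, h⟩ else 0 with hc'
  set g : H := ∑ i ∈ Finset.range N, c' i • w i with hg
  by_contra hne
  push_neg at hne
  obtain ⟨i0, hi0⟩ := hne
  have hc0' : ∑ i ∈ Finset.range N, c' i • pproj v N (w i) = 0 := by
    have hco : ∀ i : Fin N, c' (i : ℕ) • pproj v N (w (i : ℕ))
        = c i • pproj v N (w (i : ℕ)) := fun i => by simp [hc', i.isLt]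
    rw [← Fin.sum_univ_eq_sum_range (fun i => c' i • pproj v N (w i)) N,
      Finset.sum_congr rfl (fun i _ => hco i), hc0]
  have hvg : ∀ k, k < N → ⟪v k, g⟫ = 0 := by
    intro k hk
    have e0 := congrArg (fun x => ⟪v k, x⟫) hc0'
    simp only [inner_sum, inner_smul_right, inner_zero_right] at e0
    rw [hg, inner_sum]
    simp only [inner_smul_right]
    calc ∑ i ∈ Finset.range N, c' i * ⟪v k, w i⟫
        = ∑ i ∈ Finset.range N, c' i * ⟪v k, pproj v N (w i)⟫ :=
          Finset.sum_congr rfl fun i _ => by rw [inner_v_pproj hv hk]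
      _ = 0 := e0
  let hb : HilbertBasis ℕ ℂ H := HilbertBasis.mk hv (le_of_eq hv_top.symm)
  have hcoe : ⇑hb = v := HilbertBasis.coe_mk hv _
  have hhs : HasSum (fun i => ⟪v i, g⟫ • v i) g := by
    have heq : (fun i => ⟪v i, g⟫ • v i) = fun i => hb.repr g i • hb i := by
      funext i
      rw [hb.repr_apply_apply, hcoe]
    rw [heq]
    exact hb.hasSum_repr g
  have htend := hhs.tendsto_sum_nat
  set e : ℕ → ℂ := fun j => if j < N then c' j else -⟪v j, g⟫ with he
  have hsum_eq : ∀ M, N ≤ M → ∑ j ∈ Finset.range M, e j • BNseq w v N j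
      = g - ∑ j ∈ Finset.range M, ⟪v j, g⟫ • v j := by
    intro M hM
    have key : ∀ F : ℕ → H, ∑ j ∈ Finset.range M, F j
        = ∑ j ∈ Finset.range N, F j + ∑ j ∈ Finset.Ico N M, F j := by
      intro F
      rw [Finset.range_eq_Ico, ← Finset.sum_Ico_consecutive F (Nat.zero_le N) hM,
        ← Finset.range_eq_Ico]
    rw [key (fun j => e j • BNseq w v N j), key (fun j => ⟪v j, g⟫ • v j)]
    have h1 : ∑ j ∈ Finset.range N, e j • BNseq w v N j = g := by
      rw [hg]
      refine Finset.sum_congr rfl fun j hj => ?_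
      have hjN := Finset.mem_range.mp hj
      simp [he, BNseq, hjN]
    have h2 : ∑ j ∈ Finset.Ico N M, e j • BNseq w v N j
        = -∑ j ∈ Finset.Ico N M, ⟪v j, g⟫ • v j := by
      rw [← Finset.sum_neg_distrib]
      refine Finset.sum_congr rfl fun j hj => ?_
      have hjN := (Finset.mem_Ico.mp hj).1
      have hnj : ¬ j < N := Nat.not_lt.mpr hjN
      simp [he, BNseq, hnj, neg_smul]
    have h3 : ∑ j ∈ Finset.range N, ⟪v j, g⟫ • v j = 0 :=
      Finset.sum_eq_zero fun j hj => by rw [hvg j (Finset.mem_range.mp hj), zero_smul]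
    rw [h1, h2, h3, zero_add]
    abel
  have hδ : 0 < A * ∑ j ∈ Finset.range N, ‖c' j‖ ^ 2 := by
    refine mul_pos hA (Finset.sum_pos' (fun j _ => by positivity) ?_)
    refine ⟨(i0 : ℕ), Finset.mem_range.mpr i0.isLt, ?_⟩
    have hcc : c' (i0 : ℕ) = c i0 := by simp [hc', i0.isLt]
    rw [hcc]
    exact pow_pos (norm_pos_iff.mpr hi0) 2
  have hlim : Tendsto (fun M => ‖g - ∑ j ∈ Finset.range M, ⟪v j, g⟫ • v j‖ ^ 2) atTop (𝓝 0) := by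
    have h0 : Tendsto (fun M => g - ∑ j ∈ Finset.range M, ⟪v j, g⟫ • v j) atTop (𝓝 (g - g)) :=
      tendsto_const_nhds.sub htend
    rw [sub_self] at h0
    have h1 := (h0.norm).pow 2
    simpa using h1
  have hev : ∀ᶠ M in atTop, ‖g - ∑ j ∈ Finset.range M, ⟪v j, g⟫ • v j‖ ^ 2
      < A * ∑ j ∈ Finset.range N, ‖c' j‖ ^ 2 := by
    exact hlim.eventually_lt_const hδ
  obtain ⟨M, hMlt, hMN⟩ := (hev.and (eventually_ge_atTop N)).exists
  have hb1 := (hRb (Finset.range M) e).1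
  rw [hsum_eq M hMN] at hb1
  have hmono : ∑ j ∈ Finset.range N, ‖c' j‖ ^ 2 ≤ ∑ j ∈ Finset.range M, ‖e j‖ ^ 2 := by
    have hsub : Finset.range N ⊆ Finset.range M := Finset.range_subset_range.mpr hMN
    have hco : ∀ j ∈ Finset.range N, ‖c' j‖ ^ 2 = ‖e j‖ ^ 2 := fun j hj => by
      simp [he, Finset.mem_range.mp hj]
    rw [Finset.sum_congr rfl hco]
    exact Finset.sum_le_sum_of_subset_of_nonneg hsub (fun j _ _ => by positivity)
  have hchain := mul_le_mul_of_nonneg_left hmono (le_of_lt hA)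
  linarith

end AuxLemmasForStatement0

theorem statement0 (v w : ℕ → H) (hv : Orthonormal ℂ v)
    (hv_top : (span ℂ (Set.range v)).topologicalClosure = ⊤)
    (hw : ∀ j, ‖w j‖ = 1)
    (N : ℕ) (hN : 1 ≤ N) :
    List.TFAE [
      (∃ A B : ℝ, IsFrame (BNseq w v N) A B),
      span ℂ ((fun j => pproj v N (w j)) '' Set.Iio N) = span ℂ (v '' Set.Iio N),
      LinearIndependent ℂ (fun j : Fin N => pproj v N (w (j : ℕ))),
      (∃ A B : ℝ, IsRieszSeq (BNseq w v N) A B),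
      (∃ A B : ℝ, IsRieszBasis (BNseq w v N) A B)] := by
  tfae_have 5 → 1
  | ⟨A, B, h⟩ => ⟨A, B, h.1⟩
  tfae_have 5 → 4
  | ⟨A, B, h⟩ => ⟨A, B, h.2⟩
  tfae_have 1 → 2
  | ⟨A, B, h⟩ => span_of_frame hv h
  tfae_have 2 → 3
  | h => li_of_span hv h
  tfae_have 4 → 3
  | ⟨A, B, h⟩ => li_of_riesz hv hv_top h
  tfae_have 3 → 5
  | h => riesz_of_li hv hv_top h
  tfae_finish

end
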